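/- Let F : ℝ^d → ℝ be C² and (ρ,∞)-convex (F'' ≥ ρ Id), and let X : [0,T] → ℝ^d solve Newton's equation Ẍ = F''(X)F'(X). Then |Ẋ(0) + F'(X(0))|² ≤ e^{−2ρT} |Ẋ(T) + F'(X(T))|². -/

import Mathlib

open Real Set
open scoped RealInnerProductSpace

section aux

variable {d : ℕ}

local notation "E" => EuclideanSpace ℝ (Fin d)

/-- The inverse of the Riesz isomorphism, as a continuous ℝ-linear map. -/
noncomputable def dualIso (d : ℕ) :
    StrongDual ℝ (EuclideanSpace ℝ (Fin d)) →L[ℝ] EuclideanSpace ℝ (Fin d) where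
  toFun := (InnerProductSpace.toDual ℝ (EuclideanSpace ℝ (Fin d))).symm
  map_add' := map_add _
  map_smul' := fun c x => by
    simpa using (InnerProductSpace.toDual ℝ (EuclideanSpace ℝ (Fin d))).symm.map_smulₛₗ c x
  cont := (InnerProductSpace.toDual ℝ (EuclideanSpace ℝ (Fin d))).symm.continuous

lemma grad_eq (F : E → ℝ) :
    gradient F = fun x => dualIso d (fderiv ℝ F x) := rfl

lemma inner_dualIso (y : StrongDual ℝ E) (x : E) :
    ⟪dualIso d y, x⟫ = y x :=
  InnerProductSpace.toDual_symm_apply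

lemma contDiff_gradient (F : E → ℝ) (hF : ContDiff ℝ 2 F) :
    ContDiff ℝ 1 (gradient F) := by
  rw [grad_eq]
  exact (dualIso d).contDiff.comp (hF.fderiv_right (m := 1) (by norm_num))

lemma fderiv_gradient (F : E → ℝ) (hF : ContDiff ℝ 2 F) (x : E) :
    fderiv ℝ (gradient F) x = (dualIso d).comp (fderiv ℝ (fderiv ℝ F) x) := by
  have hd : DifferentiableAt ℝ (fderiv ℝ F) x :=
    ((hF.fderiv_right (m := 1) (by norm_num)).differentiable one_ne_zero) x
  rw [grad_eq]
  exact ((dualIso d).hasFDerivAt.comp x hd.hasFDerivAt).fderiv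

lemma hess_symm (F : E → ℝ) (hF : ContDiff ℝ 2 F) (x v w : E) :
    ⟪fderiv ℝ (gradient F) x v, w⟫ = ⟪fderiv ℝ (gradient F) x w, v⟫ := by
  have hsymm : IsSymmSndFDerivAt ℝ F x :=
    hF.contDiffAt.isSymmSndFDerivAt (by simp)
  rw [fderiv_gradient F hF]
  simp only [ContinuousLinearMap.coe_comp', Function.comp_apply, inner_dualIso]
  exact hsymm v w

end aux

theorem stmt_9 (d : ℕ) (T ρ : ℝ) (hT : 0 < T)
    (F : EuclideanSpace ℝ (Fin d) → ℝ) (hF : ContDiff ℝ 2 F)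
    (hconv : ∀ x v : EuclideanSpace ℝ (Fin d),
      ρ * ‖v‖ ^ 2 ≤ ⟪fderiv ℝ (gradient F) x v, v⟫)
    (X : ℝ → EuclideanSpace ℝ (Fin d)) (hX : ContDiff ℝ 2 X)
    (hNewton : ∀ t ∈ Icc (0:ℝ) T,
      deriv (deriv X) t = (1/2 : ℝ) • gradient (fun x => ‖gradient F x‖ ^ 2) (X t)) :
    ‖deriv X 0 + gradient F (X 0)‖ ^ 2
      ≤ Real.exp (-2 * ρ * T) * ‖deriv X T + gradient F (X T)‖ ^ 2 := by
  classical
  set G : EuclideanSpace ℝ (Fin d) → EuclideanSpace ℝ (Fin d) := gradient F with hG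
  have hGc : ContDiff ℝ 1 G := contDiff_gradient F hF
  set Y : ℝ → EuclideanSpace ℝ (Fin d) := fun t => deriv X t + G (X t) with hYdef
  have hXd : Differentiable ℝ X := hX.differentiable (by norm_num)
  have hX'c : ContDiff ℝ 1 (deriv X) := by
    have h2 : (2 : WithTop ℕ∞) = 1 + 1 := by norm_num
    rw [h2] at hX
    exact (contDiff_succ_iff_deriv.mp hX).2.2
  have hX'd : Differentiable ℝ (deriv X) := hX'c.differentiable one_ne_zero
  have hGd : Differentiable ℝ G := hGc.differentiable one_ne_zero
  have hY' : ∀ t, HasDerivAt Y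
      (deriv (deriv X) t + fderiv ℝ G (X t) (deriv X t)) t := by
    intro t
    exact ((hX'd t).hasDerivAt).add
      ((hGd (X t)).hasFDerivAt.comp_hasDerivAt t (hXd t).hasDerivAt)
  have hkey : ∀ t ∈ Icc (0:ℝ) T,
      ⟪deriv (deriv X) t + fderiv ℝ G (X t) (deriv X t), Y t⟫
        = ⟪fderiv ℝ G (X t) (Y t), Y t⟫ := by
    intro t ht
    have hsq : ∀ w : EuclideanSpace ℝ (Fin d),
        ⟪gradient (fun x => ‖G x‖ ^ 2) (X t), w⟫
          = 2 * ⟪fderiv ℝ G (X t) w, G (X t)⟫ := by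
      intro w
      have : ⟪gradient (fun x => ‖G x‖ ^ 2) (X t), w⟫
          = fderiv ℝ (fun x => ‖G x‖ ^ 2) (X t) w := inner_dualIso _ _
      rw [this]
      have heq : (fun x : EuclideanSpace ℝ (Fin d) => ‖G x‖ ^ 2)
          = fun x => ⟪G x, G x⟫ := by
        funext x; rw [real_inner_self_eq_norm_sq]
      have hfd : HasFDerivAt (fun x => ⟪G x, G x⟫)
          ((fderivInnerCLM ℝ (G (X t), G (X t))).comp
            ((fderiv ℝ G (X t)).prod (fderiv ℝ G (X t)))) (X t) :=
        (hGd (X t)).hasFDerivAt.inner ℝ (hGd (X t)).hasFDerivAt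
      rw [heq, hfd.fderiv]
      simp only [ContinuousLinearMap.coe_comp', Function.comp_apply,
        ContinuousLinearMap.prod_apply, fderivInnerCLM_apply]
      rw [real_inner_comm (G (X t)) (fderiv ℝ G (X t) w)]
      ring
    have hlin : fderiv ℝ G (X t) (Y t)
        = fderiv ℝ G (X t) (deriv X t) + fderiv ℝ G (X t) (G (X t)) := by
      rw [hYdef]; simp [map_add]
    have hsymm : ∀ v w : EuclideanSpace ℝ (Fin d),
        ⟪fderiv ℝ G (X t) v, w⟫ = ⟪fderiv ℝ G (X t) w, v⟫ :=
      fun v w => hess_symm F hF (X t) v w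
    have e1 : ⟪deriv (deriv X) t, Y t⟫ = ⟪fderiv ℝ G (X t) (G (X t)), Y t⟫ := by
      rw [hNewton t ht, real_inner_smul_left, hsq (Y t), hsymm (Y t) (G (X t))]
      ring
    rw [inner_add_left, e1, hlin, inner_add_left]
    ring
  set φ : ℝ → ℝ := fun t => Real.exp (-2 * ρ * t) * ‖Y t‖ ^ 2 with hφdef
  have hφ' : ∀ t, HasDerivAt φ
      (Real.exp (-2 * ρ * t) * (-2 * ρ) * ‖Y t‖ ^ 2
        + Real.exp (-2 * ρ * t)
          * (2 * ⟪deriv (deriv X) t + fderiv ℝ G (X t) (deriv X t), Y t⟫)) t := by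
    intro t
    have he : HasDerivAt (fun t => Real.exp (-2 * ρ * t))
        (Real.exp (-2 * ρ * t) * (-2 * ρ)) t := by
      have h1 : HasDerivAt (fun t : ℝ => -2 * ρ * t) (-2 * ρ) t := by
        simpa using (hasDerivAt_id t).const_mul (-2 * ρ)
      simpa [mul_comm] using h1.exp
    have hn : HasDerivAt (fun t => ‖Y t‖ ^ 2)
        (2 * ⟪deriv (deriv X) t + fderiv ℝ G (X t) (deriv X t), Y t⟫) t := by
      have heq : (fun t => ‖Y t‖ ^ 2) = fun t => ⟪Y t, Y t⟫ := by
        funext s; rw [real_inner_self_eq_norm_sq]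
      rw [heq]
      have h := (hY' t).inner ℝ (hY' t)
      refine h.congr_deriv ?_
      rw [real_inner_comm]; ring
    exact he.mul hn
  have hmono : MonotoneOn φ (Icc 0 T) := by
    apply monotoneOn_of_deriv_nonneg (convex_Icc 0 T)
    · exact (Differentiable.continuous fun t => (hφ' t).differentiableAt).continuousOn
    · exact fun t _ => (hφ' t).differentiableAt.differentiableWithinAt
    · intro t ht
      rw [interior_Icc] at ht
      have ht' : t ∈ Icc (0:ℝ) T := Ioo_subset_Icc_self ht
      rw [(hφ' t).deriv, hkey t ht']
      have h2 := hconv (X t) (Y t)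
      have hexp : (0:ℝ) < Real.exp (-2 * ρ * t) := Real.exp_pos _
      nlinarith [mul_le_mul_of_nonneg_left h2 (le_of_lt hexp)]
  have h01 : φ 0 ≤ φ T :=
    hmono ⟨le_refl 0, le_of_lt hT⟩ ⟨le_of_lt hT, le_refl T⟩ (le_of_lt hT)
  simpa [hφdef, hYdef, mul_zero, Real.exp_zero] using h01
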